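/- arXiv:1904.10344 — 2 statements merged into one kernel-verified Lean document; each statement's English description precedes it below -/
import Mathlib

section
/- Klein's inequality: for quantum states ρ, σ with σ positive definite, the quantum relative entropy D(ρ‖σ) = Tr(ρ(log ρ − log σ)) is nonnegative, with equality if and only if ρ = σ. -/
open Matrix ComplexOrder

/-- Matrix logarithm of a Hermitian matrix via its spectral decomposition
(junk value `0` for non-Hermitian input). -/
noncomputable def matLog {n : Type*} [Fintype n] [DecidableEq n]
    (A : Matrix n n ℂ) : Matrix n n ℂ :=
  if h : A.IsHermitian then
    (h.eigenvectorUnitary : Matrix n n ℂ) *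
      diagonal (fun i => (Real.log (h.eigenvalues i) : ℂ)) *
      star (h.eigenvectorUnitary : Matrix n n ℂ)
  else 0

/-- Quantum relative entropy `D(ρ‖σ) = Tr(ρ (log ρ − log σ))`. -/
noncomputable def relEnt {n : Type*} [Fintype n] [DecidableEq n]
    (ρ σ : Matrix n n ℂ) : ℝ :=
  ((ρ * (matLog ρ - matLog σ)).trace).re


lemma trace_unitary_conj {n : Type*} [Fintype n] [DecidableEq n] (U A : Matrix n n ℂ)
    (hU : star U * U = 1) : (U * A * star U).trace = A.trace := by
  rw [trace_mul_cycle, hU, one_mul]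

lemma trace_diag_mul_diag {n : Type*} [Fintype n] [DecidableEq n] (f g : n → ℂ)
    (W : Matrix n n ℂ) :
    (diagonal f * W * diagonal g * star W).trace
      = ∑ i, ∑ j, f i * g j * (W i j * star (W i j)) := by
  simp only [trace, diag_apply, mul_apply, star_apply, conjTranspose_apply,
    diagonal_apply, ite_mul, zero_mul, mul_ite, mul_zero,
    Finset.sum_ite_eq, Finset.sum_ite_eq', Finset.mem_univ, if_true]
  refine Finset.sum_congr rfl fun i _ => Finset.sum_congr rfl fun j _ => by ring

lemma trace_conj_pair {n : Type*} [Fintype n] [DecidableEq n] (U V : Matrix n n ℂ)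
    (hU : star U * U = 1) (hU' : U * star U = 1) (f g : n → ℂ) :
    ((U * diagonal f * star U) * (V * diagonal g * star V)).trace
      = ∑ i, ∑ j, f i * g j * ((star U * V) i j * star ((star U * V) i j)) := by
  have h1 : (U * diagonal f * star U) * (V * diagonal g * star V) * (U * star U)
      = U * (diagonal f * (star U * V) * diagonal g * star (star U * V)) * star U := by
    simp only [Matrix.star_mul, star_star, Matrix.mul_assoc]
  rw [hU', mul_one] at h1
  rw [h1, trace_unitary_conj _ _ hU, trace_diag_mul_diag]

lemma trace_conj_pair_same {n : Type*} [Fintype n] [DecidableEq n] (U : Matrix n n ℂ)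
    (hU : star U * U = 1) (f g : n → ℂ) :
    ((U * diagonal f * star U) * (U * diagonal g * star U)).trace = ∑ i, f i * g i := by
  have h1 : (U * diagonal f * star U) * (U * diagonal g * star U)
      = U * (diagonal f * (star U * U) * diagonal g) * star U := by
    simp only [Matrix.mul_assoc]
  rw [h1, hU, mul_one, trace_unitary_conj _ _ hU, diagonal_mul_diagonal, trace_diagonal]

lemma klein_aux {x y : ℝ} (hx : 0 ≤ x) (hy : 0 < y) :
    0 ≤ x * Real.log x - x * Real.log y - x + y ∧
    (x * Real.log x - x * Real.log y - x + y = 0 ↔ x = y) := by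
  rcases hx.eq_or_lt with rfl | hxp
  · simp only [Real.log_zero, mul_zero, zero_mul, sub_zero, zero_sub, neg_zero, zero_add]
    exact ⟨hy.le, by constructor <;> intro h <;> [linarith; linarith]⟩
  · have ht : 0 < y / x := div_pos hy hxp
    have hlog : Real.log (y / x) = Real.log y - Real.log x := Real.log_div hy.ne' hxp.ne'
    have key : x * Real.log x - x * Real.log y - x + y
        = x * ((y / x - 1) - Real.log (y / x)) := by
      rw [hlog]; field_simp; ring
    have hle : Real.log (y / x) ≤ y / x - 1 := Real.log_le_sub_one_of_pos ht
    constructor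
    · rw [key]; exact mul_nonneg hxp.le (by linarith)
    · constructor
      · intro h
        by_contra hne
        have h1 : y / x ≠ 1 := by
          intro h1
          exact hne ((div_eq_one_iff_eq hxp.ne').mp h1).symm
        have := Real.log_lt_sub_one_of_pos ht h1
        rw [key] at h
        rcases mul_eq_zero.mp h with h2 | h2
        · exact hxp.ne' h2
        · linarith
      · intro h; subst h; ring

lemma relEnt_self {n : Type*} [Fintype n] [DecidableEq n] (ρ : Matrix n n ℂ) :
    relEnt ρ ρ = 0 := by
  simp [relEnt]

/-- Klein's inequality: `D(ρ‖σ) ≥ 0`, with equality iff `ρ = σ`. -/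
theorem klein_inequality {d : ℕ} (ρ σ : Matrix (Fin d) (Fin d) ℂ)
    (hρ : ρ.PosSemidef) (hρ1 : ρ.trace = 1)
    (hσ : σ.PosDef) (hσ1 : σ.trace = 1) :
    0 ≤ relEnt ρ σ ∧ (relEnt ρ σ = 0 ↔ ρ = σ) := by
  have hH : ρ.IsHermitian := hρ.1
  have hG : σ.IsHermitian := hσ.1
  set U : Matrix (Fin d) (Fin d) ℂ := (hH.eigenvectorUnitary : Matrix (Fin d) (Fin d) ℂ)
    with hUdef
  set V : Matrix (Fin d) (Fin d) ℂ := (hG.eigenvectorUnitary : Matrix (Fin d) (Fin d) ℂ)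
    with hVdef
  obtain ⟨hU, hU'⟩ : star U * U = 1 ∧ U * star U = 1 := by
    have := hH.eigenvectorUnitary.2; rwa [Unitary.mem_iff] at this
  obtain ⟨hV, hV'⟩ : star V * V = 1 ∧ V * star V = 1 := by
    have := hG.eigenvectorUnitary.2; rwa [Unitary.mem_iff] at this
  set p : Fin d → ℝ := hH.eigenvalues with hpdef
  set q : Fin d → ℝ := hG.eigenvalues with hqdef
  have hp0 : ∀ i, 0 ≤ p i := hρ.eigenvalues_nonneg
  have hq0 : ∀ j, 0 < q j := hσ.eigenvalues_pos
  have hρd : ρ = U * diagonal (fun i => ((p i : ℝ) : ℂ)) * star U := hH.spectral_theorem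
  have hσd : σ = V * diagonal (fun j => ((q j : ℝ) : ℂ)) * star V := hG.spectral_theorem
  have hlogρ : matLog ρ = U * diagonal (fun i => ((Real.log (p i) : ℝ) : ℂ)) * star U := by
    unfold matLog; rw [dif_pos hH]
  have hlogσ : matLog σ = V * diagonal (fun j => ((Real.log (q j) : ℝ) : ℂ)) * star V := by
    unfold matLog; rw [dif_pos hG]
  set W : Matrix (Fin d) (Fin d) ℂ := star U * V with hWdef
  set c : Fin d → Fin d → ℝ := fun i j => Complex.normSq (W i j) with hcdef
  have hc0 : ∀ i j, 0 ≤ c i j := fun i j => Complex.normSq_nonneg _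
  -- trace computations
  have tr1 : ((ρ * matLog ρ).trace).re = ∑ i, p i * Real.log (p i) := by
    rw [hlogρ]
    nth_rewrite 1 [hρd]
    rw [trace_conj_pair_same U hU]
    simp [← Complex.ofReal_mul]
  have tr2 : ((ρ * matLog σ).trace).re = ∑ i, ∑ j, p i * Real.log (q j) * c i j := by
    rw [hlogσ]
    nth_rewrite 1 [hρd]
    rw [trace_conj_pair U V hU hU']
    have : ∀ i j, ((p i : ℝ) : ℂ) * ((Real.log (q j) : ℝ) : ℂ) * (W i j * star (W i j))
        = ((p i * Real.log (q j) * c i j : ℝ) : ℂ) := by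
      intro i j
      rw [show W i j * star (W i j) = ((c i j : ℝ) : ℂ) from Complex.mul_conj (W i j)]
      push_cast
      ring
    simp only [← hWdef, this, ← Complex.ofReal_sum, Complex.ofReal_re]
  -- doubly stochastic
  have hWW : W * star W = 1 := by
    rw [hWdef, Matrix.star_mul, star_star]
    calc star U * V * (star V * U) = star U * (V * star V) * U := by
          simp only [Matrix.mul_assoc]
      _ = 1 := by rw [hV', mul_one, hU]
  have hWW' : star W * W = 1 := by
    rw [hWdef, Matrix.star_mul, star_star]
    calc star V * U * (star U * V) = star V * (U * star U) * V := by
          simp only [Matrix.mul_assoc]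
      _ = 1 := by rw [hU', mul_one, hV]
  have hrow : ∀ i, ∑ j, c i j = 1 := by
    intro i
    have h : (W * star W) i i = (1 : Matrix (Fin d) (Fin d) ℂ) i i := by rw [hWW]
    rw [mul_apply, one_apply_eq] at h
    have h2 : ∀ j, W i j * (star W) j i = ((c i j : ℝ) : ℂ) := fun j =>
      Complex.mul_conj (W i j)
    rw [Finset.sum_congr rfl fun j _ => h2 j, ← Complex.ofReal_sum] at h
    exact_mod_cast h
  have hcol : ∀ j, ∑ i, c i j = 1 := by
    intro j
    have h : (star W * W) j j = (1 : Matrix (Fin d) (Fin d) ℂ) j j := by rw [hWW']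
    rw [mul_apply, one_apply_eq] at h
    have h2 : ∀ i, (star W) j i * W i j = ((c i j : ℝ) : ℂ) := fun i => by
      rw [mul_comm]
      exact Complex.mul_conj (W i j)
    rw [Finset.sum_congr rfl fun i _ => h2 i, ← Complex.ofReal_sum] at h
    exact_mod_cast h
  have hpsum : ∑ i, p i = 1 := by
    have : ρ.trace = ∑ i, ((p i : ℝ) : ℂ) := by
      rw [hρd, trace_unitary_conj _ _ hU, trace_diagonal]
    rw [hρ1, ← Complex.ofReal_sum] at this
    exact_mod_cast this.symm
  have hqsum : ∑ j, q j = 1 := by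
    have : σ.trace = ∑ j, ((q j : ℝ) : ℂ) := by
      rw [hσd, trace_unitary_conj _ _ hV, trace_diagonal]
    rw [hσ1, ← Complex.ofReal_sum] at this
    exact_mod_cast this.symm
  -- main rewriting
  have hmain : relEnt ρ σ
      = ∑ i, ∑ j, c i j * (p i * Real.log (p i) - p i * Real.log (q j) - p i + q j) := by
    have hre : relEnt ρ σ = ((ρ * matLog ρ).trace).re - ((ρ * matLog σ).trace).re := by
      rw [relEnt, mul_sub, trace_sub, Complex.sub_re]
    have E1 : ∑ i, ∑ j, c i j * (p i * Real.log (p i)) = ∑ i, p i * Real.log (p i) :=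
      Finset.sum_congr rfl fun i _ => by rw [← Finset.sum_mul, hrow i, one_mul]
    have E2 : ∑ i, ∑ j, c i j * p i = 1 := by
      rw [← hpsum]
      exact Finset.sum_congr rfl fun i _ => by rw [← Finset.sum_mul, hrow i, one_mul]
    have E3 : ∑ i, ∑ j, c i j * q j = 1 := by
      rw [Finset.sum_comm, ← hqsum]
      exact Finset.sum_congr rfl fun j _ => by rw [← Finset.sum_mul, hcol j, one_mul]
    have E4 : ∑ i, ∑ j, c i j * (p i * Real.log (q j))
        = ∑ i, ∑ j, p i * Real.log (q j) * c i j :=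
      Finset.sum_congr rfl fun i _ => Finset.sum_congr rfl fun j _ => by ring
    simp only [mul_sub, mul_add, Finset.sum_add_distrib, Finset.sum_sub_distrib]
    rw [E1, E2, E3, E4, hre, tr1, tr2]
    ring
  have hterm : ∀ i j, 0 ≤ c i j * (p i * Real.log (p i) - p i * Real.log (q j) - p i + q j) :=
    fun i j => mul_nonneg (hc0 i j) (klein_aux (hp0 i) (hq0 j)).1
  constructor
  · rw [hmain]
    exact Finset.sum_nonneg fun i _ => Finset.sum_nonneg fun j _ => hterm i j
  constructor
  · -- equality implies ρ = σ
    intro h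
    rw [hmain] at h
    have hz : ∀ i ∈ Finset.univ, ∀ j ∈ Finset.univ,
        c i j * (p i * Real.log (p i) - p i * Real.log (q j) - p i + q j) = 0 := by
      have h1 := (Finset.sum_eq_zero_iff_of_nonneg
        (fun i _ => Finset.sum_nonneg fun j _ => hterm i j)).mp h
      intro i hi j hj
      exact (Finset.sum_eq_zero_iff_of_nonneg (fun j _ => hterm i j)).mp (h1 i hi) j hj
    have key : ∀ i j, W i j = 0 ∨ p i = q j := by
      intro i j
      rcases mul_eq_zero.mp (hz i (Finset.mem_univ i) j (Finset.mem_univ j)) with h0 | h0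
      · exact Or.inl (Complex.normSq_eq_zero.mp h0)
      · exact Or.inr ((klein_aux (hp0 i) (hq0 j)).2.mp h0)
    have hDW : diagonal (fun i => ((p i : ℝ) : ℂ)) * W
        = W * diagonal (fun j => ((q j : ℝ) : ℂ)) := by
      ext i j
      rw [diagonal_mul, mul_diagonal]
      rcases key i j with h0 | h0
      · rw [h0]; ring
      · rw [h0]; ring
    have hUW : U * W = V := by rw [hWdef, ← Matrix.mul_assoc, hU', one_mul]
    have hρV : ρ * V = V * diagonal (fun j => ((q j : ℝ) : ℂ)) := by
      conv_lhs => rw [hρd]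
      simp only [Matrix.mul_assoc]
      rw [← hWdef, hDW, ← Matrix.mul_assoc, hUW]
    calc ρ = ρ * (V * star V) := by rw [hV', mul_one]
      _ = (ρ * V) * star V := by rw [mul_assoc]
      _ = V * diagonal (fun j => ((q j : ℝ) : ℂ)) * star V := by rw [hρV]
      _ = σ := hσd.symm
  · intro h
    rw [h]
    exact relEnt_self σ
end

section
/- Environment-parametrized simulation collapses adaptive discrimination to measurement on environment states: for an environment-parametrized channel E^x(ρ) = F(ρ ⊗ θ^x) with fixed channel F, any two-step adaptive protocol consisting of input state ρ, channel use E^{x₁}, adaptive channel A, channel use E^{x₂}, and final POVM element Λ satisfies Tr[Λ (E^{x₂} ∘ A ∘ E^{x₁})(ρ)] = Tr[Γ (θ^{x₁} ⊗ θ^{x₂})] for a fixed operator 0 ≤ Γ ≤ I depending only on ρ, F, A, Λ (not on x₁, x₂). -/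
open Matrix ComplexOrder

/-- Extension `id_R ⊗ Φ` of a map on matrices, acting blockwise on a bipartite system. -/
noncomputable def tensorId {r n m : Type*} [Fintype r] [Fintype n] [Fintype m]
    (Φ : Matrix n n ℂ → Matrix m m ℂ) :
    Matrix (r × n) (r × n) ℂ → Matrix (r × m) (r × m) ℂ :=
  fun X => Matrix.of fun p q => Φ (Matrix.of fun a b => X (p.1, a) (q.1, b)) p.2 q.2

/-- A quantum channel: a linear, completely positive, trace-preserving map. -/
structure IsChannel {n m : Type*} [Fintype n] [Fintype m]
    (Φ : Matrix n n ℂ → Matrix m m ℂ) : Prop where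
  map_add : ∀ X Y, Φ (X + Y) = Φ X + Φ Y
  map_smul : ∀ (c : ℂ) X, Φ (c • X) = c • Φ X
  cp : ∀ (k : ℕ) (X : Matrix (Fin k × n) (Fin k × n) ℂ), X.PosSemidef →
    (tensorId Φ X).PosSemidef
  tp : ∀ X, (Φ X).trace = X.trace

open Kronecker

/-! ### Auxiliary lemmas -/

section Aux

variable {n m : Type*} [Fintype n] [Fintype m]

lemma trace_submatrix_equiv' (σ : m ≃ n) (M : Matrix n n ℂ) :
    (M.submatrix σ σ).trace = M.trace := by
  simp only [Matrix.trace, Matrix.diag, Matrix.submatrix_apply]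
  exact Equiv.sum_comp σ (fun j => M j j)

open scoped MatrixOrder in
lemma Matrix.posSemidef_iff_eq_transpose_mul_self {M : Matrix n n ℂ} :
    M.PosSemidef ↔ ∃ B : Matrix n n ℂ, M = Bᴴ * B := by
  classical
  refine ⟨fun hM => ?_, fun ⟨B, hB⟩ => hB ▸ Matrix.posSemidef_conjTranspose_mul_self B⟩
  obtain ⟨a, h⟩ := CStarAlgebra.nonneg_iff_eq_star_mul_self.mp hM.nonneg
  exact ⟨a, h⟩

lemma conj_dotProduct' (a b : n → ℂ) :
    (starRingEnd ℂ) (star a ⬝ᵥ b) = star b ⬝ᵥ a := by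
  simp only [dotProduct, map_sum, Pi.star_apply]
  exact Finset.sum_congr rfl fun i _ => by simp [mul_comm]

lemma psd_trace_nonneg [DecidableEq n] {M : Matrix n n ℂ} (hM : M.PosSemidef) :
    0 ≤ M.trace := by
  rw [Matrix.trace]
  apply Finset.sum_nonneg
  intro i _
  have h := hM.dotProduct_mulVec_nonneg (Pi.single i 1)
  have hq : star (Pi.single i (1:ℂ)) ⬝ᵥ M *ᵥ Pi.single i (1:ℂ) = M i i := by
    simp [dotProduct, Matrix.mulVec_single, Pi.single_apply, apply_ite,
      Finset.sum_ite_eq']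
  rw [hq] at h
  exact h

lemma trace_mul_nonneg' [DecidableEq n] {A B : Matrix n n ℂ}
    (hA : A.PosSemidef) (hB : B.PosSemidef) : 0 ≤ (A * B).trace := by
  obtain ⟨C, rfl⟩ := Matrix.posSemidef_iff_eq_transpose_mul_self.mp hA
  rw [Matrix.mul_assoc, Matrix.trace_mul_comm]
  exact psd_trace_nonneg (by simpa [Matrix.mul_assoc] using hB.mul_mul_conjTranspose_same C)

lemma posSemidef_kron {X : Matrix n n ℂ} {Y : Matrix m m ℂ}
    (hX : X.PosSemidef) (hY : Y.PosSemidef) : (X ⊗ₖ Y).PosSemidef := by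
  obtain ⟨B, rfl⟩ := Matrix.posSemidef_iff_eq_transpose_mul_self.mp hX
  obtain ⟨C, rfl⟩ := Matrix.posSemidef_iff_eq_transpose_mul_self.mp hY
  rw [Matrix.mul_kronecker_mul]
  have h : Bᴴ ⊗ₖ Cᴴ = (B ⊗ₖ C)ᴴ := by
    ext ⟨i, j⟩ ⟨k, l⟩
    simp [Matrix.conjTranspose_apply]
  rw [h]
  exact Matrix.posSemidef_conjTranspose_mul_self _

lemma posSemidef_vecMulVec_star (v : n → ℂ) :
    (Matrix.vecMulVec v (star v)).PosSemidef := by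
  rw [Matrix.vecMulVec_eq (Fin 1), ← Matrix.conjTranspose_replicateCol]
  exact Matrix.posSemidef_self_mul_conjTranspose _

lemma isHermitian_of_quad [DecidableEq n] {M : Matrix n n ℂ}
    (h : ∀ v : n → ℂ, 0 ≤ star v ⬝ᵥ M *ᵥ v) : M.IsHermitian := by
  rw [Matrix.isHermitian_iff_isSymmetric, LinearMap.isSymmetric_iff_inner_map_self_real]
  intro v
  set w : n → ℂ := (WithLp.equiv 2 (n → ℂ)) v with hw
  have key : (inner ℂ (Matrix.toEuclideanLin M v) v : ℂ) = star (M *ᵥ w) ⬝ᵥ w := by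
    rw [EuclideanSpace.inner_eq_star_dotProduct, dotProduct_comm]; rfl
  have hq : 0 ≤ star w ⬝ᵥ M *ᵥ w := h w
  have him : (starRingEnd ℂ) (star w ⬝ᵥ M *ᵥ w) = star w ⬝ᵥ M *ᵥ w := by
    rw [Complex.conj_eq_iff_im]
    have := (Complex.le_def.mp hq).2
    simpa using this.symm
  rw [key, ← conj_dotProduct' w (M *ᵥ w), Complex.conj_conj]
  exact him.symm

end Aux

/-! ### The index shuffles used in the simulation map -/

def eqv1 (α β γ δ : Type*) : ((α × β) × (γ × δ)) ≃ ((δ × α) × (β × γ)) where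
  toFun x := ((x.2.2, x.1.1), (x.1.2, x.2.1))
  invFun y := ((y.1.2, y.2.1), (y.2.2, y.1.1))
  left_inv _ := rfl
  right_inv _ := rfl

def eqv2 (α β γ : Type*) : (α × β × γ) ≃ ((α × β) × γ) := (Equiv.prodAssoc α β γ).symm

def eqv3 (α β γ : Type*) : (α × β × γ) ≃ (γ × α × β) where
  toFun x := (x.2.2, (x.1, x.2.1))
  invFun y := (y.2.1, (y.2.2, y.1))
  left_inv _ := rfl
  right_inv _ := rfl

/-! ### Lemmas about `tensorId` -/

section TensorId

variable {r0 n m : Type*} [Fintype r0] [Fintype n] [Fintype m]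
variable {Φ : Matrix n n ℂ → Matrix m m ℂ}

lemma tensorId_map_add (hΦ : ∀ X Y, Φ (X + Y) = Φ X + Φ Y)
    (X Y : Matrix (r0 × n) (r0 × n) ℂ) :
    tensorId Φ (X + Y) = tensorId Φ X + tensorId Φ Y := by
  ext p q
  show Φ (Matrix.of fun a b => (X + Y) (p.1, a) (q.1, b)) p.2 q.2
      = (Φ (Matrix.of fun a b => X (p.1, a) (q.1, b))
          + Φ (Matrix.of fun a b => Y (p.1, a) (q.1, b))) p.2 q.2
  have hb : (Matrix.of fun a b => (X + Y) (p.1, a) (q.1, b))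
      = (Matrix.of fun a b => X (p.1, a) (q.1, b)) + (Matrix.of fun a b => Y (p.1, a) (q.1, b)) := by
    ext a b; simp
  rw [hb, hΦ]

lemma tensorId_map_smul (hΦ : ∀ (c : ℂ) X, Φ (c • X) = c • Φ X)
    (c : ℂ) (X : Matrix (r0 × n) (r0 × n) ℂ) :
    tensorId Φ (c • X) = c • tensorId Φ X := by
  ext p q
  show Φ (Matrix.of fun a b => (c • X) (p.1, a) (q.1, b)) p.2 q.2
      = (c • Φ (Matrix.of fun a b => X (p.1, a) (q.1, b))) p.2 q.2
  have hb : (Matrix.of fun a b => (c • X) (p.1, a) (q.1, b))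
      = c • (Matrix.of fun a b => X (p.1, a) (q.1, b)) := by
    ext a b; simp
  rw [hb, hΦ]

lemma tensorId_trace (hΦ : ∀ X, (Φ X).trace = X.trace)
    (X : Matrix (r0 × n) (r0 × n) ℂ) :
    (tensorId Φ X).trace = X.trace := by
  simp only [Matrix.trace, Matrix.diag, tensorId, Matrix.of_apply]
  rw [Fintype.sum_prod_type]
  have h : ∀ p₁ : r0, (∑ p₂ : m, Φ (Matrix.of fun a b => X (p₁, a) (p₁, b)) p₂ p₂)
      = ∑ a : n, X (p₁, a) (p₁, a) := by
    intro p₁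
    have := hΦ (Matrix.of fun a b => X (p₁, a) (p₁, b))
    simpa [Matrix.trace, Matrix.diag] using this
  simp_rw [h]
  exact (Fintype.sum_prod_type fun x => X x x).symm

lemma tensorId_posSemidef [DecidableEq n] (hΦ : IsChannel Φ)
    {X : Matrix (r0 × n) (r0 × n) ℂ} (hX : X.PosSemidef) :
    (tensorId (r := r0) Φ X).PosSemidef := by
  classical
  let σ : r0 ≃ Fin (Fintype.card r0) := Fintype.equivFin r0
  have hX' : (X.submatrix (Prod.map σ.symm id) (Prod.map σ.symm id)).PosSemidef :=
    hX.submatrix _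
  have h2 := hΦ.cp _ _ hX'
  have key : tensorId (r := r0) Φ X
      = (tensorId Φ (X.submatrix (Prod.map σ.symm id) (Prod.map σ.symm id))).submatrix
        (Prod.map σ id) (Prod.map σ id) := by
    ext ⟨p₁, p₂⟩ ⟨q₁, q₂⟩
    show Φ (Matrix.of fun a b => X (p₁, a) (q₁, b)) p₂ q₂
        = Φ (Matrix.of fun a b =>
            X.submatrix (Prod.map σ.symm id) (Prod.map σ.symm id) (σ p₁, a) (σ q₁, b)) p₂ q₂
    have hb : (Matrix.of fun a b => X (p₁, a) (q₁, b))
        = (Matrix.of fun a b =>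
            X.submatrix (Prod.map σ.symm id) (Prod.map σ.symm id) (σ p₁, a) (σ q₁, b)) := by
      ext a b; simp
    rw [hb]
  rw [key]
  exact h2.submatrix _

end TensorId

/-! ### The simulation map `Psi` -/

noncomputable def Psi {r b' b e : ℕ}
    (F : Matrix (Fin b' × Fin e) (Fin b' × Fin e) ℂ → Matrix (Fin b) (Fin b) ℂ)
    (A : Matrix (Fin r × Fin b) (Fin r × Fin b) ℂ →
      Matrix (Fin r × Fin b') (Fin r × Fin b') ℂ)
    (ρ : Matrix (Fin r × Fin b') (Fin r × Fin b') ℂ)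
    (X : Matrix (Fin e × Fin e) (Fin e × Fin e) ℂ) :
    Matrix (Fin r × Fin b) (Fin r × Fin b) ℂ :=
  tensorId F
    ((tensorId A
        ((tensorId F
            ((X ⊗ₖ ρ).submatrix (eqv1 (Fin e) (Fin r) (Fin b') (Fin e))
              (eqv1 (Fin e) (Fin r) (Fin b') (Fin e)))).submatrix
          (eqv2 (Fin e) (Fin r) (Fin b)) (eqv2 (Fin e) (Fin r) (Fin b)))).submatrix
      (eqv3 (Fin r) (Fin b') (Fin e)) (eqv3 (Fin r) (Fin b') (Fin e)))

section Psi

variable {r b' b e : ℕ}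
variable {F : Matrix (Fin b' × Fin e) (Fin b' × Fin e) ℂ → Matrix (Fin b) (Fin b) ℂ}
variable {A : Matrix (Fin r × Fin b) (Fin r × Fin b) ℂ →
  Matrix (Fin r × Fin b') (Fin r × Fin b') ℂ}
variable {ρ : Matrix (Fin r × Fin b') (Fin r × Fin b') ℂ}

lemma Psi_posSemidef (hF : IsChannel F) (hA : IsChannel A) (hρ : ρ.PosSemidef)
    {X : Matrix (Fin e × Fin e) (Fin e × Fin e) ℂ} (hX : X.PosSemidef) :
    (Psi F A ρ X).PosSemidef :=
  tensorId_posSemidef hF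
    (((tensorId_posSemidef hA
      (((tensorId_posSemidef hF
        ((posSemidef_kron hX hρ).submatrix _)).submatrix _))).submatrix _))

lemma Psi_trace (hF : IsChannel F) (hA : IsChannel A) (hρ1 : ρ.trace = 1)
    (X : Matrix (Fin e × Fin e) (Fin e × Fin e) ℂ) :
    (Psi F A ρ X).trace = X.trace := by
  rw [Psi, tensorId_trace hF.tp, trace_submatrix_equiv', tensorId_trace hA.tp,
    trace_submatrix_equiv', tensorId_trace hF.tp, trace_submatrix_equiv',
    Matrix.trace_kronecker, hρ1, mul_one]

lemma Psi_add (hF : IsChannel F) (hA : IsChannel A)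
    (X Y : Matrix (Fin e × Fin e) (Fin e × Fin e) ℂ) :
    Psi F A ρ (X + Y) = Psi F A ρ X + Psi F A ρ Y := by
  rw [Psi, Psi, Psi]
  simp only [Matrix.add_kronecker, Matrix.submatrix_add, Pi.add_apply,
    tensorId_map_add hF.map_add, tensorId_map_add hA.map_add]

lemma Psi_smul (hF : IsChannel F) (hA : IsChannel A)
    (c : ℂ) (X : Matrix (Fin e × Fin e) (Fin e × Fin e) ℂ) :
    Psi F A ρ (c • X) = c • Psi F A ρ X := by
  rw [Psi, Psi]
  simp only [Matrix.smul_kronecker, Matrix.submatrix_smul, Pi.smul_apply,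
    tensorId_map_smul hF.map_smul, tensorId_map_smul hA.map_smul]

lemma Psi_zero (hF : IsChannel F) (hA : IsChannel A) :
    Psi F A ρ 0 = 0 := by
  have h := Psi_smul (ρ := ρ) hF hA 0 0
  simpa using h

lemma Psi_sum (hF : IsChannel F) (hA : IsChannel A) {ι : Type*} (s : Finset ι)
    (f : ι → Matrix (Fin e × Fin e) (Fin e × Fin e) ℂ) :
    Psi F A ρ (∑ i ∈ s, f i) = ∑ i ∈ s, Psi F A ρ (f i) := by
  classical
  induction s using Finset.cons_induction with
  | empty => simpa using Psi_zero (ρ := ρ) hF hA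
  | cons a s ha ih => rw [Finset.sum_cons, Finset.sum_cons, Psi_add hF hA, ih]

/-- The key computation: on product environment states, `Psi` reproduces the
two-step adaptive protocol. -/
lemma Psi_kron (hF : IsChannel F) (hA : IsChannel A)
    (θ₁ θ₂ : Matrix (Fin e) (Fin e) ℂ) :
    Psi F A ρ (θ₁ ⊗ₖ θ₂)
      = tensorId (fun Y => F (Y ⊗ₖ θ₂)) (A (tensorId (fun Y => F (Y ⊗ₖ θ₁)) ρ)) := by
  set N : Matrix (Fin r × Fin b) (Fin r × Fin b) ℂ :=
    tensorId (fun Y => F (Y ⊗ₖ θ₁)) ρ with hN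
  set V : Matrix (Fin e × (Fin r × Fin b)) (Fin e × (Fin r × Fin b)) ℂ :=
    (tensorId F
        (((θ₁ ⊗ₖ θ₂) ⊗ₖ ρ).submatrix (eqv1 (Fin e) (Fin r) (Fin b') (Fin e))
          (eqv1 (Fin e) (Fin r) (Fin b') (Fin e)))).submatrix
      (eqv2 (Fin e) (Fin r) (Fin b)) (eqv2 (Fin e) (Fin r) (Fin b)) with hV
  have hblock : ∀ u v : Fin e,
      (Matrix.of fun p q => V (u, p) (v, q)) = θ₂ u v • N := by
    intro u v
    ext ⟨s, γ⟩ ⟨t, γ'⟩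
    show V (u, (s, γ)) (v, (t, γ')) = (θ₂ u v • N) (s, γ) (t, γ')
    have harg : (Matrix.of fun (ax : Fin b' × Fin e) (by' : Fin b' × Fin e) =>
          (((θ₁ ⊗ₖ θ₂) ⊗ₖ ρ).submatrix (eqv1 (Fin e) (Fin r) (Fin b') (Fin e))
            (eqv1 (Fin e) (Fin r) (Fin b') (Fin e))) ((u, s), ax) ((v, t), by'))
        = θ₂ u v • ((Matrix.of fun a b => ρ (s, a) (t, b)) ⊗ₖ θ₁) := by
      ext ⟨a, x⟩ ⟨b, y⟩
      simp only [Matrix.of_apply, Matrix.submatrix_apply, eqv1, Equiv.coe_fn_mk,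
        Matrix.kroneckerMap_apply, Matrix.smul_apply, smul_eq_mul]
      ring
    show F (Matrix.of fun (ax : Fin b' × Fin e) (by' : Fin b' × Fin e) =>
          (((θ₁ ⊗ₖ θ₂) ⊗ₖ ρ).submatrix (eqv1 (Fin e) (Fin r) (Fin b') (Fin e))
            (eqv1 (Fin e) (Fin r) (Fin b') (Fin e))) ((u, s), ax) ((v, t), by')) γ γ'
        = (θ₂ u v • N) (s, γ) (t, γ')
    rw [harg, hF.map_smul]
    simp only [Matrix.smul_apply, smul_eq_mul, hN]
    rfl
  ext ⟨s, β⟩ ⟨t, β'⟩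
  show F (Matrix.of fun (au : Fin b' × Fin e) (bv : Fin b' × Fin e) =>
        ((tensorId A V).submatrix (eqv3 (Fin r) (Fin b') (Fin e))
          (eqv3 (Fin r) (Fin b') (Fin e))) (s, au) (t, bv)) β β'
      = F ((Matrix.of fun a b => (A N) (s, a) (t, b)) ⊗ₖ θ₂) β β'
  have hmain : (Matrix.of fun (au : Fin b' × Fin e) (bv : Fin b' × Fin e) =>
        ((tensorId A V).submatrix (eqv3 (Fin r) (Fin b') (Fin e))
          (eqv3 (Fin r) (Fin b') (Fin e))) (s, au) (t, bv))
      = (Matrix.of fun a b => (A N) (s, a) (t, b)) ⊗ₖ θ₂ := by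
    ext ⟨a, u⟩ ⟨b, v⟩
    show A (Matrix.of fun p q => V (u, p) (v, q)) (s, a) (t, b)
      = (A N) (s, a) (t, b) * θ₂ u v
    rw [hblock u v, hA.map_smul]
    simp only [Matrix.smul_apply, smul_eq_mul]
    ring
  rw [hmain]

end Psi

/-- for an environment-parametrized collection
`E^x(ρ) = F(ρ ⊗ θ^x)`, any two-step adaptive discrimination protocol
(initial state `ρ`, channel use, adaptive channel `A`, channel use, POVM element `Λ`)
is simulated by a fixed measurement operator `Γ` on the environment states:
`Tr[Λ (E^{x₂} ∘ A ∘ E^{x₁})(ρ)] = Tr[Γ (θ^{x₁} ⊗ θ^{x₂})]` with `0 ≤ Γ ≤ I`,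
where `Γ` depends only on `ρ, F, A, Λ`. -/
theorem env_parametrized_adaptive_reduction {r b' b e : ℕ}
    (F : Matrix (Fin b' × Fin e) (Fin b' × Fin e) ℂ → Matrix (Fin b) (Fin b) ℂ)
    (hF : IsChannel F)
    (A : Matrix (Fin r × Fin b) (Fin r × Fin b) ℂ →
      Matrix (Fin r × Fin b') (Fin r × Fin b') ℂ)
    (hA : IsChannel A)
    (ρ : Matrix (Fin r × Fin b') (Fin r × Fin b') ℂ)
    (hρ : ρ.PosSemidef) (hρ1 : ρ.trace = 1)
    (Λ : Matrix (Fin r × Fin b) (Fin r × Fin b) ℂ)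
    (hΛ : Λ.PosSemidef) (hΛI : (1 - Λ).PosSemidef) :
    ∃ Γ : Matrix (Fin e × Fin e) (Fin e × Fin e) ℂ,
      Γ.PosSemidef ∧ (1 - Γ).PosSemidef ∧
      ∀ θ₁ θ₂ : Matrix (Fin e) (Fin e) ℂ,
        θ₁.PosSemidef → θ₁.trace = 1 → θ₂.PosSemidef → θ₂.trace = 1 →
        (Λ * tensorId (fun Y => F (Y ⊗ₖ θ₂))
              (A (tensorId (fun Y => F (Y ⊗ₖ θ₁)) ρ))).trace
          = (Γ * (θ₁ ⊗ₖ θ₂)).trace := by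
  classical
  set Γ : Matrix (Fin e × Fin e) (Fin e × Fin e) ℂ :=
    Matrix.of fun p q => (Λ * Psi F A ρ (Matrix.single q p 1)).trace with hΓ
  -- the fundamental trace identity relating Γ and Psi
  have traceΓ : ∀ X : Matrix (Fin e × Fin e) (Fin e × Fin e) ℂ,
      (Γ * X).trace = (Λ * Psi F A ρ X).trace := by
    intro X
    have hΨX : Psi F A ρ X
        = ∑ i : Fin e × Fin e, ∑ j : Fin e × Fin e,
            X i j • Psi F A ρ (Matrix.single i j 1) := by
      conv_lhs => rw [Matrix.matrix_eq_sum_single X]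
      rw [Psi_sum hF hA]
      refine Finset.sum_congr rfl fun i _ => ?_
      rw [Psi_sum hF hA]
      refine Finset.sum_congr rfl fun j _ => ?_
      rw [show Matrix.single i j (X i j) = X i j • Matrix.single i j 1 by
        rw [Matrix.smul_single]; simp]
      rw [Psi_smul hF hA]
    have hR : (Λ * Psi F A ρ X).trace
        = ∑ i : Fin e × Fin e, ∑ j : Fin e × Fin e,
            X i j * (Λ * Psi F A ρ (Matrix.single i j 1)).trace := by
      rw [hΨX]
      rw [Matrix.mul_sum, Matrix.trace_sum]
      refine Finset.sum_congr rfl fun i _ => ?_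
      rw [Matrix.mul_sum, Matrix.trace_sum]
      refine Finset.sum_congr rfl fun j _ => ?_
      rw [Matrix.mul_smul, Matrix.trace_smul, smul_eq_mul]
    have hL : (Γ * X).trace
        = ∑ p : Fin e × Fin e, ∑ q : Fin e × Fin e, Γ p q * X q p := by
      simp [Matrix.trace, Matrix.diag, Matrix.mul_apply]
    rw [hL, hR, Finset.sum_comm]
    refine Finset.sum_congr rfl fun q _ => Finset.sum_congr rfl fun p _ => ?_
    rw [hΓ]
    simp only [Matrix.of_apply]
    ring
  -- the quadratic form of Γ
  have quadΓ : ∀ v : Fin e × Fin e → ℂ,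
      star v ⬝ᵥ Γ *ᵥ v = (Λ * Psi F A ρ (Matrix.vecMulVec v (star v))).trace := by
    intro v
    rw [← traceΓ]
    have hL : star v ⬝ᵥ Γ *ᵥ v
        = ∑ p : Fin e × Fin e, ∑ q : Fin e × Fin e,
            (starRingEnd ℂ) (v p) * (Γ p q * v q) := by
      simp [dotProduct, Matrix.mulVec, Finset.mul_sum]
    have hR : (Γ * Matrix.vecMulVec v (star v)).trace
        = ∑ p : Fin e × Fin e, ∑ q : Fin e × Fin e,
            Γ p q * (v q * (starRingEnd ℂ) (v p)) := by
      simp [Matrix.trace, Matrix.diag, Matrix.mul_apply, Matrix.vecMulVec_apply]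
    rw [hL, hR]
    refine Finset.sum_congr rfl fun p _ => Finset.sum_congr rfl fun q _ => ?_
    ring
  have hquad_nonneg : ∀ v : Fin e × Fin e → ℂ, 0 ≤ star v ⬝ᵥ Γ *ᵥ v := by
    intro v
    rw [quadΓ]
    exact trace_mul_nonneg' hΛ (Psi_posSemidef hF hA hρ (posSemidef_vecMulVec_star v))
  have hΓpsd : Γ.PosSemidef := Matrix.PosSemidef.of_dotProduct_mulVec_nonneg (isHermitian_of_quad hquad_nonneg) hquad_nonneg
  have hsub_nonneg : ∀ v : Fin e × Fin e → ℂ, 0 ≤ star v ⬝ᵥ (1 - Γ) *ᵥ v := by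
    intro v
    have hsplit : star v ⬝ᵥ (1 - Γ) *ᵥ v = star v ⬝ᵥ v - star v ⬝ᵥ Γ *ᵥ v := by
      rw [Matrix.sub_mulVec, dotProduct_sub, Matrix.one_mulVec]
    have hvv : star v ⬝ᵥ v = (Matrix.vecMulVec v (star v)).trace := by
      simp only [Matrix.trace, Matrix.diag, Matrix.vecMulVec_apply, dotProduct,
        Pi.star_apply]
      exact Finset.sum_congr rfl fun i _ => by ring
    rw [hsplit, hvv, quadΓ, ← Psi_trace hF hA hρ1 (Matrix.vecMulVec v (star v))]
    have hfin : (Psi F A ρ (Matrix.vecMulVec v (star v))).trace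
        - (Λ * Psi F A ρ (Matrix.vecMulVec v (star v))).trace
        = ((1 - Λ) * Psi F A ρ (Matrix.vecMulVec v (star v))).trace := by
      rw [Matrix.sub_mul, Matrix.trace_sub, Matrix.one_mul]
    rw [hfin]
    exact trace_mul_nonneg' hΛI (Psi_posSemidef hF hA hρ (posSemidef_vecMulVec_star v))
  have hΓsub : (1 - Γ).PosSemidef := by
    refine Matrix.PosSemidef.of_dotProduct_mulVec_nonneg ?_ hsub_nonneg
    exact Matrix.IsHermitian.sub Matrix.isHermitian_one hΓpsd.1
  refine ⟨Γ, hΓpsd, hΓsub, ?_⟩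
  intro θ₁ θ₂ _ _ _ _
  rw [traceΓ (θ₁ ⊗ₖ θ₂), Psi_kron hF hA]
end
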